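/- Let L₀ be a closed subspace of a Hilbert space H with orthogonal projection P₀, and let L be a closed subspace such that P_L - P₀ is compact. Then (L, L₀⊥) is a Fredholm pair: L ∩ L₀⊥ is finite-dimensional and L + L₀⊥ is closed of finite codimension. -/

import Mathlib

variable {H : Type*} [NormedAddCommGroup H] [InnerProductSpace ℂ H] [CompleteSpace H]

/-- The orthogonal projection onto a closed subspace, as an operator `H →L[ℂ] H`. -/
noncomputable def orthProj (L : Submodule ℂ H) (hL : IsClosed (L : Set H)) : H →L[ℂ] H :=
  haveI := hL.completeSpace_coe
  L.subtypeL ∘L L.orthogonalProjectionOnto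

lemma orthProj_mem (L : Submodule ℂ H) (hL : IsClosed (L : Set H)) (x : H) :
    orthProj L hL x ∈ L := by
  haveI := hL.completeSpace_coe
  exact (L.orthogonalProjectionOnto x).2

lemma orthProj_eq_self (L : Submodule ℂ H) (hL : IsClosed (L : Set H)) {x : H} (hx : x ∈ L) :
    orthProj L hL x = x := by
  haveI := hL.completeSpace_coe
  exact Submodule.starProjection_eq_self_iff.mpr hx

lemma sub_orthProj_mem (L : Submodule ℂ H) (hL : IsClosed (L : Set H)) (x : H) :
    x - orthProj L hL x ∈ Lᗮ := by
  haveI := hL.completeSpace_coe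
  exact Submodule.sub_starProjection_mem_orthogonal x

lemma orthProj_eq_zero (L : Submodule ℂ H) (hL : IsClosed (L : Set H)) {x : H} (hx : x ∈ Lᗮ) :
    orthProj L hL x = 0 := by
  haveI := hL.completeSpace_coe
  show ((L.orthogonalProjectionOnto x : L) : H) = 0
  rw [Submodule.orthogonalProjectionOnto_apply_of_mem_orthogonal hx]
  rfl

lemma orthProj_eq_zero_iff (L : Submodule ℂ H) (hL : IsClosed (L : Set H)) {x : H} :
    orthProj L hL x = 0 ↔ x ∈ Lᗮ := by
  constructor
  · intro h
    have := sub_orthProj_mem L hL x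
    rwa [h, sub_zero] at this
  · exact orthProj_eq_zero L hL

/-- A closed subspace on which a compact operator acts as the identity is
finite-dimensional. -/
lemma finiteDimensional_of_fixed (K : H →L[ℂ] H) (hK : IsCompactOperator ⇑K)
    (S : Submodule ℂ H) (hS : IsClosed (S : Set H)) (hfix : ∀ x ∈ S, K x = x) :
    FiniteDimensional ℂ ↥S := by
  have hK' : IsCompactOperator ⇑(K : H →ₗ[ℂ] H) := by
    rwa [ContinuousLinearMap.coe_coe]
  obtain ⟨C, hCc, hCs⟩ := hK'.image_closedBall_subset_compact 1
  have hsub : (S : Set H) ∩ Metric.closedBall 0 1 ⊆ C := by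
    rintro x ⟨hxS, hxb⟩
    have : K x ∈ C := hCs ⟨x, hxb, rfl⟩
    rwa [hfix x hxS] at this
  have hcl : IsClosed ((S : Set H) ∩ Metric.closedBall 0 1) :=
    hS.inter Metric.isClosed_closedBall
  have hcpt2 : IsCompact ((S : Set H) ∩ Metric.closedBall 0 1) :=
    hCc.of_isClosed_subset hcl hsub
  have himg : (Subtype.val '' (Metric.closedBall (0 : S) 1) : Set H)
      = (S : Set H) ∩ Metric.closedBall 0 1 := by
    ext y
    constructor
    · rintro ⟨⟨z, hz⟩, hzb, rfl⟩
      refine ⟨hz, ?_⟩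
      simpa [Metric.mem_closedBall, dist_zero_right] using hzb
    · rintro ⟨hyS, hyb⟩
      exact ⟨⟨y, hyS⟩, by simpa [Metric.mem_closedBall, dist_zero_right] using hyb, rfl⟩
  have : IsCompact (Metric.closedBall (0 : S) 1) := by
    rw [Topology.IsEmbedding.subtypeVal.isCompact_iff, himg]
    exact hcpt2
  exact FiniteDimensional.of_isCompact_closedBall₀ ℂ one_pos this

/-- If `L₀` and `L` are closed subspaces of a Hilbert space `H` with `P_L - P_{L₀}`
compact, then `(L, L₀ᗮ)` is a Fredholm pair: `L ∩ L₀ᗮ` is finite-dimensional and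
`L + L₀ᗮ` is closed of finite codimension. -/
theorem compact_perturbation_fredholm_pair (L₀ L : Submodule ℂ H)
    (hL₀c : IsClosed (L₀ : Set H)) (hLc : IsClosed (L : Set H))
    (hcpt : IsCompactOperator (⇑(orthProj L hLc - orthProj L₀ hL₀c))) :
    FiniteDimensional ℂ ↥(L ⊓ L₀ᗮ) ∧
      IsClosed ((L ⊔ L₀ᗮ : Submodule ℂ H) : Set H) ∧
      FiniteDimensional ℂ ↥((L ⊔ L₀ᗮ)ᗮ) := by
  haveI := hL₀c.completeSpace_coe
  set P : H →L[ℂ] H := orthProj L hLc with hP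
  set P₀ : H →L[ℂ] H := orthProj L₀ hL₀c with hP₀
  set K : H →L[ℂ] H := P - P₀ with hKdef
  -- Part 1: finite dimensionality of L ⊓ L₀ᗮ
  set M₁ : Submodule ℂ H := L ⊓ L₀ᗮ with hM₁
  have hM₁c : IsClosed (M₁ : Set H) := by
    rw [hM₁, Submodule.coe_inf]
    exact hLc.inter L₀.isClosed_orthogonal
  have h1 : FiniteDimensional ℂ ↥M₁ := by
    refine finiteDimensional_of_fixed K hcpt M₁ hM₁c ?_
    intro x hx
    rw [hM₁, Submodule.mem_inf] at hx
    rw [hKdef, ContinuousLinearMap.sub_apply, hP, hP₀,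
      orthProj_eq_self L hLc hx.1, orthProj_eq_zero L₀ hL₀c hx.2, sub_zero]
  -- finite dimensionality of the orthogonal complement of the sum
  have horth : (L ⊔ L₀ᗮ)ᗮ = Lᗮ ⊓ L₀ := by
    rw [← Submodule.inf_orthogonal, Submodule.orthogonal_orthogonal]
  have h3 : FiniteDimensional ℂ ↥((L ⊔ L₀ᗮ)ᗮ) := by
    rw [horth]
    have hKn : IsCompactOperator ⇑(P₀ - P) := by
      have heq : ⇑(P₀ - P) = -⇑(P - P₀) := by funext x; simp
      rw [heq]
      exact hcpt.neg
    refine finiteDimensional_of_fixed (P₀ - P) hKn (Lᗮ ⊓ L₀) ?_ ?_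
    · rw [Submodule.coe_inf]
      exact L.isClosed_orthogonal.inter hL₀c
    · intro x hx
      rw [Submodule.mem_inf] at hx
      rw [ContinuousLinearMap.sub_apply, hP, hP₀, orthProj_eq_self L₀ hL₀c hx.2,
        orthProj_eq_zero L hLc hx.1, sub_zero]
  haveI : FiniteDimensional ℂ ↥M₁ := h1
  -- key norm bound on L ∩ M₁ᗮ
  have key : ∃ C : ℝ, ∀ x, x ∈ L → x ∈ M₁ᗮ → ‖x‖ ≤ C * ‖P₀ x‖ := by
    by_contra hcon
    push_neg at hcon
    have hx' : ∀ n : ℕ, ∃ x, x ∈ L ∧ x ∈ M₁ᗮ ∧ ((n : ℝ) + 1) * ‖P₀ x‖ < ‖x‖ := by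
      intro n
      obtain ⟨x, hxL, hxO, hlt⟩ := hcon ((n : ℝ) + 1)
      exact ⟨x, hxL, hxO, hlt⟩
    choose x hxL hxO hlt using hx'
    have hxne : ∀ n, ‖x n‖ ≠ 0 := by
      intro n h
      have h' := hlt n
      rw [h] at h'
      nlinarith [norm_nonneg (P₀ (x n))]
    set u : ℕ → H := fun n => ((‖x n‖ : ℂ))⁻¹ • x n with hu
    have hun : ∀ n, ‖u n‖ = 1 := by
      intro n
      rw [hu]
      simp only [norm_smul, norm_inv, Complex.norm_real, norm_norm]
      field_simp [hxne n]
    have huL : ∀ n, u n ∈ L := fun n => L.smul_mem _ (hxL n)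
    have huO : ∀ n, u n ∈ M₁ᗮ := fun n => M₁ᗮ.smul_mem _ (hxO n)
    have hP0u : ∀ n, ‖P₀ (u n)‖ ≤ 1 / ((n : ℝ) + 1) := by
      intro n
      have h0 : (0:ℝ) < ‖x n‖ := lt_of_le_of_ne (norm_nonneg _) (Ne.symm (hxne n))
      have hn1 : (0:ℝ) < (n : ℝ) + 1 := by positivity
      have hlt' := hlt n
      have hnorm : ‖P₀ (u n)‖ = ‖x n‖⁻¹ * ‖P₀ (x n)‖ := by
        rw [hu]
        simp [norm_smul]
      rw [hnorm, inv_mul_le_iff₀ h0, mul_one_div, le_div_iff₀ hn1]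
      nlinarith [norm_nonneg (P₀ (x n))]
    have hP0tend : Filter.Tendsto (fun n => P₀ (u n)) Filter.atTop (nhds 0) := by
      apply tendsto_zero_iff_norm_tendsto_zero.mpr
      exact squeeze_zero (fun n => norm_nonneg _) hP0u tendsto_one_div_add_atTop_nhds_zero_nat
    have hKcl : IsCompactOperator ⇑((K : H →ₗ[ℂ] H)) := by
      rwa [ContinuousLinearMap.coe_coe]
    have hCc : IsCompact (closure (⇑(K : H →ₗ[ℂ] H) '' Metric.closedBall 0 1)) :=
      hKcl.isCompact_closure_image_of_bounded Metric.isBounded_closedBall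
    have hmem : ∀ n, K (u n) ∈ closure (⇑(K : H →ₗ[ℂ] H) '' Metric.closedBall 0 1) := by
      intro n
      exact subset_closure ⟨u n, by simp [Metric.mem_closedBall, dist_zero_right, (hun n).le], rfl⟩
    obtain ⟨y, -, φ, hφ, hconv⟩ := hCc.tendsto_subseq hmem
    have hKu : ∀ n, K (u n) = u n - P₀ (u n) := by
      intro n
      rw [hKdef, ContinuousLinearMap.sub_apply, hP, orthProj_eq_self L hLc (huL n)]
    have hutend : Filter.Tendsto (u ∘ φ) Filter.atTop (nhds y) := by
      have hadd := hconv.add (hP0tend.comp hφ.tendsto_atTop)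
      rw [add_zero] at hadd
      refine Filter.Tendsto.congr (fun n => ?_) hadd
      simp only [Function.comp_apply, hKu]
      abel
    have hyL : y ∈ L := hLc.mem_of_tendsto hutend
      (Filter.Eventually.of_forall (fun n => huL (φ n)))
    have hyO : y ∈ M₁ᗮ := M₁.isClosed_orthogonal.mem_of_tendsto hutend
      (Filter.Eventually.of_forall (fun n => huO (φ n)))
    have hP0y : P₀ y = 0 :=
      tendsto_nhds_unique ((P₀.continuous.tendsto y).comp hutend)
        (hP0tend.comp hφ.tendsto_atTop)
    have hyM₁ : y ∈ M₁ := by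
      rw [hM₁, Submodule.mem_inf]
      exact ⟨hyL, (orthProj_eq_zero_iff L₀ hL₀c).mp hP0y⟩
    have hy0 : y = 0 :=
      (Submodule.mem_bot ℂ).mp (M₁.orthogonal_disjoint.le_bot (Submodule.mem_inf.mpr ⟨hyM₁, hyO⟩))
    have hy1 : ‖y‖ = 1 := by
      have hn : Filter.Tendsto (fun n => ‖(u ∘ φ) n‖) Filter.atTop (nhds ‖y‖) := hutend.norm
      rw [show (fun n => ‖(u ∘ φ) n‖) = fun _ => (1:ℝ) from funext fun n => hun (φ n)] at hn
      exact tendsto_nhds_unique hn tendsto_const_nhds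
    rw [hy0, norm_zero] at hy1
    norm_num at hy1
  obtain ⟨C, hC⟩ := key
  set C' : ℝ := |C| + 1 with hC'def
  have hC'pos : 0 < C' := by positivity
  have hC' : ∀ x, x ∈ L → x ∈ M₁ᗮ → ‖x‖ ≤ C' * ‖P₀ x‖ := by
    intro x hxL hxO
    refine (hC x hxL hxO).trans (mul_le_mul_of_nonneg_right ?_ (norm_nonneg _))
    rw [hC'def]
    nlinarith [abs_nonneg C, le_abs_self C]
  -- V = P₀(L) is closed
  set V : Submodule ℂ H := Submodule.map (P₀ : H →ₗ[ℂ] H) L with hV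
  have hVclosed : IsClosed (V : Set H) := by
    apply IsSeqClosed.isClosed
    intro f yy hf hfy
    have hf' : ∀ n, ∃ l, l ∈ L ∧ P₀ l = f n := by
      intro n
      obtain ⟨l, hl, hPl⟩ := Submodule.mem_map.mp (hf n)
      exact ⟨l, hl, hPl⟩
    choose xx hxxL hxxP using hf'
    set Q : H →L[ℂ] H := orthProj M₁ hM₁c with hQ
    set z : ℕ → H := fun n => xx n - Q (xx n) with hz
    have hzL : ∀ n, z n ∈ L := by
      intro n
      exact L.sub_mem (hxxL n)
        ((inf_le_left : L ⊓ L₀ᗮ ≤ L) (orthProj_mem M₁ hM₁c (xx n)))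
    have hzO : ∀ n, z n ∈ M₁ᗮ := fun n => sub_orthProj_mem M₁ hM₁c (xx n)
    have hzP : ∀ n, P₀ (z n) = f n := by
      intro n
      rw [hz]
      simp only [map_sub, hxxP]
      rw [hP₀, orthProj_eq_zero L₀ hL₀c
        ((inf_le_right : L ⊓ L₀ᗮ ≤ L₀ᗮ) (orthProj_mem M₁ hM₁c (xx n))), sub_zero]
    have hfc : CauchySeq f := hfy.cauchySeq
    have hzc : CauchySeq z := by
      rw [Metric.cauchySeq_iff]
      intro ε hε
      obtain ⟨N, hN⟩ := Metric.cauchySeq_iff.mp hfc (ε / C') (by positivity)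
      refine ⟨N, fun m hm n hn => ?_⟩
      have hmem : z m - z n ∈ L := L.sub_mem (hzL m) (hzL n)
      have hmemO : z m - z n ∈ M₁ᗮ := M₁ᗮ.sub_mem (hzO m) (hzO n)
      have hb := hC' _ hmem hmemO
      rw [map_sub, hzP, hzP] at hb
      have hfd : dist (f m) (f n) < ε / C' := hN m hm n hn
      rw [dist_eq_norm] at hfd ⊢
      calc ‖z m - z n‖ ≤ C' * ‖f m - f n‖ := hb
        _ < C' * (ε / C') := by exact mul_lt_mul_of_pos_left hfd hC'pos
        _ = ε := by field_simp
    obtain ⟨w, hw⟩ := cauchySeq_tendsto_of_complete hzc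
    have hwL : w ∈ L := hLc.mem_of_tendsto hw (Filter.Eventually.of_forall hzL)
    have hPw : P₀ w = yy := by
      have ht : Filter.Tendsto (fun n => P₀ (z n)) Filter.atTop (nhds (P₀ w)) :=
        (P₀.continuous.tendsto w).comp hw
      rw [show (fun n => P₀ (z n)) = f from funext hzP] at ht
      exact tendsto_nhds_unique ht hfy
    exact Submodule.mem_map.mpr ⟨w, hwL, hPw⟩
  -- the sum is the preimage of V under P₀
  have hset : ((L ⊔ L₀ᗮ : Submodule ℂ H) : Set H) = ⇑P₀ ⁻¹' (V : Set H) := by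
    ext v
    simp only [SetLike.mem_coe, Set.mem_preimage]
    constructor
    · intro hv
      obtain ⟨l, hl, m, hm, rfl⟩ := Submodule.mem_sup.mp hv
      rw [map_add, hP₀, orthProj_eq_zero L₀ hL₀c hm, add_zero]
      exact Submodule.mem_map.mpr ⟨l, hl, rfl⟩
    · intro hv
      obtain ⟨l, hl, hPl⟩ := Submodule.mem_map.mp hv
      have hv1 : v - P₀ v ∈ L₀ᗮ := sub_orthProj_mem L₀ hL₀c v
      have hv2 : l - P₀ l ∈ L₀ᗮ := sub_orthProj_mem L₀ hL₀c l
      have hveq : v = l + ((v - P₀ v) - (l - P₀ l)) := by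
        rw [show P₀ l = P₀ v from hPl]; abel
      rw [hveq]
      exact Submodule.add_mem_sup hl (L₀ᗮ.sub_mem hv1 hv2)
  have h2 : IsClosed ((L ⊔ L₀ᗮ : Submodule ℂ H) : Set H) := by
    rw [hset]
    exact hVclosed.preimage P₀.continuous
  exact ⟨h1, h2, h3⟩
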